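/- Let G be a finite group of order g ≥ 2 and let ρ : G → Matrix (Fin N) (Fin N) ℂ be a representation of G by complex matrices (a monoid homomorphism). Set Φ* = (1/g) • ∑_{h∈G} ρ(h) and define the Lindblad generator L* = (1/(g−1)) • ∑_{h∈G, h≠1} ρ(h) − 1. Then for every t ≥ 0, Matrix.exp(t • L*) = e^{−t·g/(g−1)} • 1 + (1 − e^{−t·g/(g−1)}) • Φ*. In particular the whole segment from the identity to the center Φ* of the group polytope consists of accessible maps. -/

import Mathlib

set_option maxHeartbeats 1000000

open NormedSpace in
lemma exp_smul_idem {𝔸 : Type*} [NormedRing 𝔸] [NormedAlgebra ℂ 𝔸] [CompleteSpace 𝔸]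
    (P : 𝔸) (hP : P * P = P) (z : ℂ) :
    exp (z • P) = 1 + (Complex.exp z - 1) • P := by
  have hPn : ∀ n : ℕ, P ^ (n + 1) = P := by
    intro n; induction n with
    | zero => simp
    | succ n ih => rw [pow_succ, ih, hP]
  have hsum : Summable fun n : ℕ => ((n.factorial : ℂ))⁻¹ • (z • P) ^ n :=
    expSeries_summable' (𝕂 := ℂ) (z • P)
  have hc : Summable fun n : ℕ => ((n.factorial : ℂ))⁻¹ * z ^ n := by
    simpa [smul_eq_mul] using expSeries_summable' (𝕂 := ℂ) z
  have hc1 : Summable fun n : ℕ => (((n+1).factorial : ℂ))⁻¹ * z ^ (n + 1) :=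
    (summable_nat_add_iff 1).mpr hc
  have hz : ∑' n : ℕ, (((n+1).factorial : ℂ))⁻¹ * z ^ (n + 1) = Complex.exp z - 1 := by
    have h0 := Summable.tsum_eq_zero_add hc
    have hez : Complex.exp z = ∑' n : ℕ, ((n.factorial : ℂ))⁻¹ * z ^ n := by
      rw [Complex.exp_eq_exp_ℂ, exp_eq_tsum ℂ]; simp [smul_eq_mul]
    rw [hez, h0]; simp
  calc exp (z • P) = ∑' n : ℕ, ((n.factorial : ℂ))⁻¹ • (z • P) ^ n := by
        rw [exp_eq_tsum ℂ]
    _ = 1 + ∑' n : ℕ, (((n+1).factorial : ℂ))⁻¹ • (z • P) ^ (n + 1) := by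
        rw [Summable.tsum_eq_zero_add hsum]; simp
    _ = 1 + (Complex.exp z - 1) • P := by
        congr 1
        have he : ∀ n : ℕ, (((n+1).factorial : ℂ))⁻¹ • (z • P) ^ (n + 1)
            = ((((n+1).factorial : ℂ))⁻¹ * z ^ (n + 1)) • P := by
          intro n
          rw [smul_pow, hPn, smul_smul]
        rw [tsum_congr he, Summable.tsum_smul_const hc1, hz]

open NormedSpace in
lemma exp_smul_idem_matrix {n : ℕ} (P : Matrix (Fin n) (Fin n) ℂ) (hP : P * P = P) (z : ℂ) :
    exp (z • P) = 1 + (Complex.exp z - 1) • P := by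
  letI : SeminormedRing (Matrix (Fin n) (Fin n) ℂ) := Matrix.linftyOpSemiNormedRing
  letI : NormedRing (Matrix (Fin n) (Fin n) ℂ) := Matrix.linftyOpNormedRing
  letI : NormedAlgebra ℂ (Matrix (Fin n) (Fin n) ℂ) := Matrix.linftyOpNormedAlgebra
  exact exp_smul_idem P hP z

theorem segment_to_center_is_accessible
    {G : Type*} [Group G] [Fintype G] [DecidableEq G] {N : ℕ}
    (hg : 2 ≤ Fintype.card G)
    (ρ : G →* Matrix (Fin N) (Fin N) ℂ)
    (t : ℝ) (ht : 0 ≤ t) :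
    NormedSpace.exp
        (t • ((((Fintype.card G : ℝ) - 1)⁻¹ •
            ∑ h ∈ Finset.univ.erase (1 : G), ρ h) - 1)) =
      Real.exp (-(t * (Fintype.card G : ℝ) / ((Fintype.card G : ℝ) - 1))) •
          (1 : Matrix (Fin N) (Fin N) ℂ) +
        (1 - Real.exp (-(t * (Fintype.card G : ℝ) / ((Fintype.card G : ℝ) - 1)))) •
          (((Fintype.card G : ℂ))⁻¹ • ∑ h : G, ρ h) := by
  set g := Fintype.card G with hgdef
  have hgR : ((g : ℝ) - 1) ≠ 0 := by
    have : (2 : ℝ) ≤ (g : ℝ) := by exact_mod_cast hg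
    linarith
  have hgC : (g : ℂ) ≠ 0 := by
    have : 0 < g := lt_of_lt_of_le (by norm_num) hg
    exact_mod_cast Nat.cast_ne_zero.mpr this.ne'
  have hgC1 : ((g : ℂ) - 1) ≠ 0 := by
    intro h
    apply hgR
    have : (g : ℂ) = 1 := by linear_combination h
    have : (g : ℝ) = 1 := by exact_mod_cast this
    rw [this]; ring
  set S : Matrix (Fin N) (Fin N) ℂ := ∑ h : G, ρ h with hSdef
  -- sum over erase
  have herase : ∑ h ∈ Finset.univ.erase (1 : G), ρ h = S - 1 := by
    rw [Finset.sum_erase_eq_sub (Finset.mem_univ (1 : G)), map_one, hSdef]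
  -- S * S = g • S
  have hSS : S * S = (g : ℂ) • S := by
    rw [hSdef, Finset.sum_mul_sum]
    have : ∀ h : G, ∑ k : G, ρ h * ρ k = S := by
      intro h
      rw [hSdef]
      calc ∑ k : G, ρ h * ρ k = ∑ k : G, ρ (h * k) := by simp [map_mul]
        _ = ∑ k : G, ρ k := Fintype.sum_bijective (h * ·)
              (Group.mulLeft_bijective h) _ _ (fun k => rfl)
    rw [Finset.sum_congr rfl (fun h _ => this h), Finset.sum_const, Finset.card_univ,
      Nat.cast_smul_eq_nsmul ℂ]
  set P : Matrix (Fin N) (Fin N) ℂ := (g : ℂ)⁻¹ • S with hPdef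
  have hP : P * P = P := by
    rw [hPdef, smul_mul_assoc, mul_smul_comm, hSS, smul_smul, smul_smul]
    congr 1
    field_simp
  set s : ℝ := t * (g : ℝ) / ((g : ℝ) - 1) with hsdef
  have hRsmul : ∀ (r : ℝ) (M : Matrix (Fin N) (Fin N) ℂ), r • M = (r : ℂ) • M := by
    intro r M
    rw [← smul_one_smul ℂ r M, Complex.real_smul, mul_one]
  -- rewrite the argument
  have harg : t • ((((g : ℝ) - 1)⁻¹ • ∑ h ∈ Finset.univ.erase (1 : G), ρ h) - 1)
      = (s : ℂ) • P + (-(s : ℂ)) • 1 := by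
    rw [herase, hRsmul, hRsmul, hPdef, hsdef]
    push_cast
    match_scalars <;> · field_simp <;> ring
  rw [harg]
  have hcomm : Commute ((s : ℂ) • P) ((-(s : ℂ)) • (1 : Matrix (Fin N) (Fin N) ℂ)) :=
    (Commute.one_right _).smul_right _ |>.smul_left _
  rw [Matrix.exp_add_of_commute _ _ hcomm,
    exp_smul_idem_matrix P hP, exp_smul_idem_matrix 1 (by simp) (-(s : ℂ))]
  have h1 : (1 : Matrix (Fin N) (Fin N) ℂ)
        + (Complex.exp (-(s:ℂ)) - 1) • (1 : Matrix (Fin N) (Fin N) ℂ)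
      = Complex.exp (-(s:ℂ)) • 1 := by
    rw [sub_smul, one_smul]; abel
  rw [h1]
  have hmuls : (Complex.exp (s:ℂ) - 1) * Complex.exp (-(s:ℂ)) = 1 - Complex.exp (-(s:ℂ)) := by
    rw [sub_mul, one_mul, ← Complex.exp_add]
    simp
  have hexp : Complex.exp (-(s : ℂ)) = ((Real.exp (-s) : ℝ) : ℂ) := by
    rw [Complex.ofReal_exp]; push_cast; ring_nf
  have hns : -(t * (g : ℝ) / ((g : ℝ) - 1)) = -s := by rw [hsdef]
  rw [add_mul, one_mul, smul_mul_assoc, mul_smul_comm, mul_one, smul_smul, hmuls,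
    hexp, hns, hRsmul, hRsmul]
  push_cast
  ring_nf
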